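/- Discrete Poincaré inequality: for Ω ⊂ ℝ^d open and bounded there is C_P(Ω) > 0 such that for all ε ∈ (0,1] and all u : Ω ∩ εℤ^d → ℝ^d vanishing on the boundary layer ∂_ε Ω (extended by 0 to εℤ^d), ‖u‖_{ℓ²_ε(int_ε Ω)} ≤ C_P ‖u‖_{h¹_ε(sint_ε Ω)}; moreover for any u : int_ε Ω → ℝ^d, ‖u‖_{h^{-1}_ε(int_ε Ω)} ≤ C_P ‖u‖_{ℓ²_ε(int_ε Ω)}. One may take C_P = diam(Ω) + 1. -/

import Mathlib

noncomputable section

/-- The lattice point `εz ∈ ℝ^d`. -/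
def latPt (d : ℕ) (ε : ℝ) (z : Fin d → ℤ) : EuclideanSpace ℝ (Fin d) :=
  WithLp.toLp 2 (fun i => ε * (z i : ℝ))

/-- The discrete interior `int_ε Ω`: `εz ∈ Ω` and `dist(εz, ∂Ω) > 2εR₀`. -/
def intEps (d : ℕ) (Ω : Set (EuclideanSpace ℝ (Fin d))) (ε R₀ : ℝ) :
    Set (Fin d → ℤ) :=
  { z | latPt d ε z ∈ Ω ∧ 2 * ε * R₀ < Metric.infDist (latPt d ε z) (frontier Ω) }

/-- The discrete semi-interior `sint_ε Ω`: `εz ∈ Ω` and `dist(εz, ∂Ω) > εR₀`. -/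
def sintEps (d : ℕ) (Ω : Set (EuclideanSpace ℝ (Fin d))) (ε R₀ : ℝ) :
    Set (Fin d → ℤ) :=
  { z | latPt d ε z ∈ Ω ∧ ε * R₀ < Metric.infDist (latPt d ε z) (frontier Ω) }

/-- The squared scaled discrete gradient
`|D_{𝓡,ε} u (x)|² = Σ_ρ Σ_j ((u(x+ερ)−u(x))/ε)_j²`. -/
def DnormSq (d : ℕ) (R : Finset (Fin d → ℤ)) (ε : ℝ)
    (u : (Fin d → ℤ) → (Fin d → ℝ)) (x : Fin d → ℤ) : ℝ :=
  ∑ ρ ∈ R, ∑ j, ((u (x + ρ) j - u x j) / ε) ^ 2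

/-- The `ℓ²_ε` norm over `int_ε Ω`. -/
def l2Norm (d : ℕ) (Ω : Set (EuclideanSpace ℝ (Fin d))) (ε R₀ : ℝ)
    (u : (Fin d → ℤ) → (Fin d → ℝ)) : ℝ :=
  Real.sqrt (ε ^ d * ∑ᶠ z ∈ intEps d Ω ε R₀, ∑ j, (u z j) ^ 2)

/-- The `h¹_ε` (semi-)norm over `sint_ε Ω`. -/
def h1Norm (d : ℕ) (R : Finset (Fin d → ℤ)) (Ω : Set (EuclideanSpace ℝ (Fin d)))
    (ε R₀ : ℝ) (u : (Fin d → ℤ) → (Fin d → ℝ)) : ℝ :=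
  Real.sqrt (ε ^ d * ∑ᶠ z ∈ sintEps d Ω ε R₀, DnormSq d R ε u z)

/-- The `h⁻¹_ε` norm over `int_ε Ω`. -/
def hm1Norm (d : ℕ) (R : Finset (Fin d → ℤ)) (Ω : Set (EuclideanSpace ℝ (Fin d)))
    (ε R₀ : ℝ) (u : (Fin d → ℤ) → (Fin d → ℝ)) : ℝ :=
  sSup { r : ℝ | ∃ φ : (Fin d → ℤ) → (Fin d → ℝ),
    (∀ z, z ∉ intEps d Ω ε R₀ → φ z = 0) ∧
    h1Norm d R Ω ε R₀ φ = 1 ∧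
    r = ε ^ d * ∑ᶠ z ∈ intEps d Ω ε R₀, ∑ j, u z j * φ z j }

/-- Auxiliary: a nonnegative sum over `A` is at most the sum over `B`, if the
summand is supported in `B`. -/
lemma aux_sum_le_sum_support {α : Type*} [DecidableEq α] (A B : Finset α)
    (g : α → ℝ) (hg : ∀ x, 0 ≤ g x) (h : ∀ x, g x ≠ 0 → x ∈ B) :
    ∑ x ∈ A, g x ≤ ∑ x ∈ B, g x := by
  calc ∑ x ∈ A, g x = ∑ x ∈ A.filter (· ∈ B), g x :=
        (Finset.sum_filter_of_ne (fun x _ hgx => h x hgx)).symm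
    _ ≤ ∑ x ∈ B, g x :=
        Finset.sum_le_sum_of_subset_of_nonneg
          (fun x hx => (Finset.mem_filter.mp hx).2) (fun x _ _ => hg x)

/-- Auxiliary: Cauchy–Schwarz with constants. -/
lemma aux_sq_sum_le (n : ℕ) (f : ℕ → ℝ) :
    (∑ i ∈ Finset.range n, f i) ^ 2 ≤ (n : ℝ) * ∑ i ∈ Finset.range n, f i ^ 2 := by
  have := Finset.sum_mul_sq_le_sq_mul_sq (Finset.range n) (fun _ => (1 : ℝ)) f
  simpa using this

/-- discrete Poincaré inequality. With `C_P = diam Ω + 1`, for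
all `ε ∈ (0,1]` one has `‖u‖_{ℓ²_ε} ≤ C_P ‖u‖_{h¹_ε}` for `u` vanishing on the
discrete boundary layer, and `‖u‖_{h⁻¹_ε} ≤ C_P ‖u‖_{ℓ²_ε}` for all `u`. -/
theorem discrete_poincare
    (d : ℕ) (hd : 0 < d) (R : Finset (Fin d → ℤ))
    (h0 : (0 : Fin d → ℤ) ∉ R) (hRne : R.Nonempty)
    (R₀ : ℝ) (hR₀pos : 0 < R₀)
    (hR₀ : ∀ ρ ∈ R, Real.sqrt (∑ i, ((ρ i : ℝ)) ^ 2) ≤ R₀)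
    (Ω : Set (EuclideanSpace ℝ (Fin d)))
    (hΩo : IsOpen Ω) (hΩb : Bornology.IsBounded Ω)
    (ε : ℝ) (hε : ε ∈ Set.Ioc (0 : ℝ) 1) :
    (∀ u : (Fin d → ℤ) → (Fin d → ℝ),
      (∀ z, z ∉ intEps d Ω ε R₀ → u z = 0) →
      l2Norm d Ω ε R₀ u ≤ (Metric.diam Ω + 1) * h1Norm d R Ω ε R₀ u) ∧
    (∀ u : (Fin d → ℤ) → (Fin d → ℝ),
      hm1Norm d R Ω ε R₀ u ≤ (Metric.diam Ω + 1) * l2Norm d Ω ε R₀ u) := by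
  classical
  obtain ⟨hε0, hε1⟩ := hε
  haveI : Nonempty (Fin d) := Fin.pos_iff_nonempty.mp hd
  set S := intEps d Ω ε R₀ with hSdef
  set T := sintEps d Ω ε R₀ with hTdef
  -- distance between lattice points
  have latdist : ∀ z w : Fin d → ℤ, dist (latPt d ε z) (latPt d ε w)
      = ε * Real.sqrt (∑ i, ((z i : ℝ) - (w i : ℝ)) ^ 2) := by
    intro z w
    have hsum : ∑ i, dist (latPt d ε z i) (latPt d ε w i) ^ 2
        = ε ^ 2 * ∑ i, ((z i : ℝ) - (w i : ℝ)) ^ 2 := by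
      rw [Finset.mul_sum]
      refine Finset.sum_congr rfl fun i _ => ?_
      have h1 : dist (latPt d ε z i) (latPt d ε w i) = |ε * z i - ε * w i| :=
        Real.dist_eq _ _
      rw [h1, sq_abs]
      ring
    rw [EuclideanSpace.dist_eq, hsum, Real.sqrt_mul (sq_nonneg ε), Real.sqrt_sq hε0.le]
  -- `T` is finite
  have hTfin : T.Finite := by
    obtain ⟨M, hMball⟩ := hΩb.subset_closedBall 0
    have hM : ∀ y ∈ Ω, ‖y‖ ≤ M := fun y hy => by
      simpa [Metric.mem_closedBall, dist_zero_right] using hMball hy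
    refine Set.Finite.subset (Finset.finite_toSet
      (Finset.Icc (fun _ : Fin d => (-⌈M / ε⌉ : ℤ)) (fun _ => ⌈M / ε⌉))) ?_
    intro z hz
    have hzΩ : latPt d ε z ∈ Ω := hz.1
    have hnorm := hM _ hzΩ
    have hcoord : ∀ i, |ε * (z i : ℝ)| ≤ M := by
      intro i
      have h1 : |ε * (z i : ℝ)| = Real.sqrt ((ε * z i) ^ 2) := (Real.sqrt_sq_eq_abs _).symm
      have h2 : ((ε * (z i : ℝ)) ^ 2) ≤ ∑ j, ‖latPt d ε z j‖ ^ 2 := by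
        have he : (ε * (z i : ℝ)) ^ 2 = ‖latPt d ε z i‖ ^ 2 := by
          rw [Real.norm_eq_abs, sq_abs]
          rfl
        rw [he]
        exact Finset.single_le_sum (f := fun j => ‖latPt d ε z j‖ ^ 2)
          (fun j _ => sq_nonneg _) (Finset.mem_univ i)
      calc |ε * (z i : ℝ)| = Real.sqrt ((ε * z i) ^ 2) := h1
        _ ≤ Real.sqrt (∑ j, ‖latPt d ε z j‖ ^ 2) := Real.sqrt_le_sqrt h2
        _ = ‖latPt d ε z‖ := by rw [EuclideanSpace.norm_eq]
        _ ≤ M := hnorm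
    simp only [Finset.coe_Icc, Set.mem_Icc, Pi.le_def]
    have habs : ∀ i, |(z i : ℝ)| ≤ M / ε := by
      intro i
      have h := hcoord i
      rw [abs_mul, abs_of_pos hε0] at h
      rw [le_div_iff₀ hε0]
      nlinarith [h]
    constructor
    · intro i
      have h3 : -(M / ε) ≤ (z i : ℝ) := (abs_le.mp (habs i)).1
      have h4 : ((-⌈M / ε⌉ : ℤ) : ℝ) ≤ (z i : ℝ) := by
        push_cast
        calc -(⌈M / ε⌉ : ℝ) ≤ -(M / ε) := by linarith [Int.le_ceil (M / ε)]
          _ ≤ (z i : ℝ) := h3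
      exact_mod_cast h4
    · intro i
      have h3 : (z i : ℝ) ≤ M / ε := (abs_le.mp (habs i)).2
      have h4 : (z i : ℝ) ≤ ((⌈M / ε⌉ : ℤ) : ℝ) := h3.trans (Int.le_ceil _)
      exact_mod_cast h4
  have hST : S ⊆ T := by
    intro z hz
    refine ⟨hz.1, lt_of_le_of_lt ?_ hz.2⟩
    nlinarith [hε0, hR₀pos]
  have hSfin : S.Finite := hTfin.subset hST
  set Sf := hSfin.toFinset with hSfdef
  set Tf := hTfin.toFinset with hTfdef
  -- pick a direction ρ
  obtain ⟨ρ, hρR⟩ := hRne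
  have hρ0 : ρ ≠ 0 := fun h => h0 (h ▸ hρR)
  have hρnorm1 : (1 : ℝ) ≤ Real.sqrt (∑ i, ((ρ i : ℝ)) ^ 2) := by
    obtain ⟨i, hi⟩ : ∃ i, ρ i ≠ 0 := by
      by_contra h
      push_neg at h
      exact hρ0 (funext h)
    have h1 : (1 : ℝ) ≤ ((ρ i : ℝ)) ^ 2 := by
      have := Int.one_le_abs hi
      have h2 : (1 : ℝ) ≤ |(ρ i : ℝ)| := by exact_mod_cast this
      nlinarith [abs_nonneg ((ρ i : ℝ)), sq_abs ((ρ i : ℝ))]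
    have h2 : (1 : ℝ) ≤ ∑ i, ((ρ i : ℝ)) ^ 2 := by
      have := Finset.single_le_sum (f := fun j => ((ρ j : ℝ)) ^ 2)
        (fun j _ => sq_nonneg _) (Finset.mem_univ i)
      linarith
    calc (1 : ℝ) = Real.sqrt 1 := Real.sqrt_one.symm
      _ ≤ _ := Real.sqrt_le_sqrt h2
  have hρR₀ : Real.sqrt (∑ i, ((ρ i : ℝ)) ^ 2) ≤ R₀ := hR₀ ρ hρR
  -- shifted membership: z + ρ ∈ S → z ∈ T
  have hshift : ∀ z : Fin d → ℤ, z + ρ ∈ S → z ∈ T := by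
    intro z hz
    obtain ⟨hzΩ, hzd⟩ := hz
    have hdistρ : dist (latPt d ε (z + ρ)) (latPt d ε z) ≤ ε * R₀ := by
      rw [latdist]
      have : ∑ i, (((z + ρ) i : ℝ) - (z i : ℝ)) ^ 2 = ∑ i, ((ρ i : ℝ)) ^ 2 := by
        refine Finset.sum_congr rfl fun i _ => ?_
        have : ((z + ρ) i : ℝ) = (z i : ℝ) + (ρ i : ℝ) := by push_cast [Pi.add_apply]; ring
        rw [this]; ring
      rw [this]
      exact mul_le_mul_of_nonneg_left hρR₀ hε0.le
    have hεR₀ : 0 < ε * R₀ := mul_pos hε0 hR₀pos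
    have hne_univ : Ω ≠ Set.univ := by
      intro h
      rw [h, frontier_univ, Metric.infDist_empty] at hzd
      nlinarith
    have hzΩ' : latPt d ε z ∈ Ω := by
      by_contra hc
      obtain ⟨p, hp, hpe⟩ := exists_mem_frontier_infDist_compl_eq_dist hzΩ hne_univ
      have h1 : Metric.infDist (latPt d ε (z + ρ)) (frontier Ω)
          ≤ dist (latPt d ε (z + ρ)) p := Metric.infDist_le_dist_of_mem hp
      have h2 : Metric.infDist (latPt d ε (z + ρ)) Ωᶜ
          ≤ dist (latPt d ε (z + ρ)) (latPt d ε z) :=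
        Metric.infDist_le_dist_of_mem hc
      rw [← hpe] at h1
      nlinarith [hεR₀]
    refine ⟨hzΩ', ?_⟩
    have h3 := Metric.infDist_le_infDist_add_dist
      (x := latPt d ε (z + ρ)) (y := latPt d ε z) (s := frontier Ω)
    nlinarith [hεR₀]
  -- the constant
  set D := Metric.diam Ω with hDdef
  have hD0 : 0 ≤ D := Metric.diam_nonneg
  set N : ℕ := ⌊D / ε⌋₊ + 1 with hNdef
  have hNε : (N : ℝ) * ε ≤ D + 1 := by
    have h1 : (⌊D / ε⌋₊ : ℝ) ≤ D / ε := Nat.floor_le (div_nonneg hD0 hε0.le)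
    have h2 : ((N : ℝ)) = (⌊D / ε⌋₊ : ℝ) + 1 := by push_cast [hNdef]; ring
    rw [h2]
    have : ((⌊D / ε⌋₊ : ℝ) + 1) * ε ≤ (D / ε + 1) * ε := by nlinarith
    calc ((⌊D / ε⌋₊ : ℝ) + 1) * ε ≤ (D / ε + 1) * ε := this
      _ = D + ε := by field_simp
      _ ≤ D + 1 := by linarith
  have hDN : D < (N : ℝ) * ε := by
    have h1 : D / ε < (N : ℝ) := by
      have := Nat.lt_floor_add_one (D / ε)
      push_cast [hNdef]
      linarith
    calc D = D / ε * ε := by field_simp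
      _ < (N : ℝ) * ε := by nlinarith
  -- vanishing after N steps
  have hvanish : ∀ u : (Fin d → ℤ) → (Fin d → ℝ),
      (∀ z, z ∉ S → u z = 0) → ∀ z ∈ S, u (z + N • ρ) = 0 := by
    intro u hu z hz
    apply hu
    intro hmem
    have hdd := Metric.dist_le_diam_of_mem hΩb hz.1 hmem.1
    rw [latdist] at hdd
    have key : ∑ i, ((z i : ℝ) - ((z + N • ρ) i : ℝ)) ^ 2
        = (N : ℝ) ^ 2 * ∑ i, ((ρ i : ℝ)) ^ 2 := by
      rw [Finset.mul_sum]
      refine Finset.sum_congr rfl fun i _ => ?_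
      have h5 : ((z + N • ρ) i : ℝ) = (z i : ℝ) + (N : ℝ) * (ρ i : ℝ) := by
        have h6 : (z + N • ρ) i = z i + (N : ℤ) * ρ i := by
          simp [Pi.add_apply, Pi.smul_apply, nsmul_eq_mul]
        rw [h6]
        push_cast
        ring
      rw [h5]; ring
    rw [key, Real.sqrt_mul (sq_nonneg _), Real.sqrt_sq (Nat.cast_nonneg N)] at hdd
    have hN1 : (1 : ℝ) ≤ (N : ℝ) := by
      have : (1 : ℕ) ≤ N := Nat.le_add_left 1 _
      exact_mod_cast this
    nlinarith [hρnorm1]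
  -- Part 1
  have part1 : ∀ u : (Fin d → ℤ) → (Fin d → ℝ),
      (∀ z, z ∉ intEps d Ω ε R₀ → u z = 0) →
      l2Norm d Ω ε R₀ u ≤ (Metric.diam Ω + 1) * h1Norm d R Ω ε R₀ u := by
    intro u hu
    set g : (Fin d → ℤ) → ℝ := fun x => ∑ j, (u (x + ρ) j - u x j) ^ 2 with hgdef
    have hg0 : ∀ x, 0 ≤ g x := fun x => Finset.sum_nonneg fun j _ => sq_nonneg _
    have hgsupp : ∀ x, g x ≠ 0 → x ∈ Tf := by
      intro x hgx
      have hor : u (x + ρ) ≠ 0 ∨ u x ≠ 0 := by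
        by_contra h
        push_neg at h
        exact hgx (by simp [hgdef, h.1, h.2])
      rw [hTfdef, Set.Finite.mem_toFinset]
      rcases hor with h | h
      · exact hshift x (by by_contra hc; exact h (hu _ hc))
      · exact hST (by by_contra hc; exact h (hu _ hc))
    -- telescoping + Cauchy–Schwarz pointwise
    have step : ∀ z ∈ Sf, ∑ j, u z j ^ 2
        ≤ (N : ℝ) * ∑ k ∈ Finset.range N, g (z + k • ρ) := by
      intro z hz
      have hz' : z ∈ S := hSfin.mem_toFinset.mp hz
      have hzero : u (z + N • ρ) = 0 := hvanish u hu z hz'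
      have htel : ∀ j, u z j
          = ∑ k ∈ Finset.range N, (u (z + k • ρ) j - u (z + (k + 1) • ρ) j) := by
        intro j
        have hts := Finset.sum_range_sub' (f := fun k => u (z + k • ρ) j) N
        rw [hts, hzero]
        simp [zero_nsmul]
      calc ∑ j, u z j ^ 2
          = ∑ j, (∑ k ∈ Finset.range N, (u (z + k • ρ) j - u (z + (k + 1) • ρ) j)) ^ 2 := by
            refine Finset.sum_congr rfl fun j _ => ?_
            rw [← htel j]
        _ ≤ ∑ j, (N : ℝ) * ∑ k ∈ Finset.range N,
              (u (z + k • ρ) j - u (z + (k + 1) • ρ) j) ^ 2 :=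
            Finset.sum_le_sum fun j _ => aux_sq_sum_le N _
        _ = (N : ℝ) * ∑ k ∈ Finset.range N, g (z + k • ρ) := by
            rw [← Finset.mul_sum]
            congr 1
            rw [Finset.sum_comm]
            refine Finset.sum_congr rfl fun k _ => ?_
            refine Finset.sum_congr rfl fun j _ => ?_
            have h1 : z + (k + 1) • ρ = z + k • ρ + ρ := by
              rw [succ_nsmul, ← add_assoc]
            rw [h1, ← neg_sub, neg_sq]
    have main : ∑ z ∈ Sf, ∑ j, u z j ^ 2 ≤ (N : ℝ) ^ 2 * ∑ x ∈ Tf, g x := by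
      calc ∑ z ∈ Sf, ∑ j, u z j ^ 2
          ≤ ∑ z ∈ Sf, (N : ℝ) * ∑ k ∈ Finset.range N, g (z + k • ρ) :=
            Finset.sum_le_sum step
        _ = (N : ℝ) * ∑ k ∈ Finset.range N, ∑ z ∈ Sf, g (z + k • ρ) := by
            rw [← Finset.mul_sum, Finset.sum_comm]
        _ ≤ (N : ℝ) * ∑ k ∈ Finset.range N, ∑ x ∈ Tf, g x := by
            refine mul_le_mul_of_nonneg_left ?_ (Nat.cast_nonneg N)
            refine Finset.sum_le_sum fun k _ => ?_
            have himg : ∑ z ∈ Sf, g (z + k • ρ)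
                = ∑ y ∈ Sf.image (· + k • ρ), g y := by
              rw [Finset.sum_image]
              intro a _ b _ hab
              exact add_right_cancel hab
            rw [himg]
            exact aux_sum_le_sum_support _ _ g hg0 hgsupp
        _ = (N : ℝ) * ((N : ℝ) * ∑ x ∈ Tf, g x) := by
            rw [Finset.sum_const, Finset.card_range, nsmul_eq_mul]
        _ = (N : ℝ) ^ 2 * ∑ x ∈ Tf, g x := by ring
    have hgD : ∀ x, g x ≤ ε ^ 2 * DnormSq d R ε u x := by
      intro x
      have heq : g x = ε ^ 2 * ∑ j, ((u (x + ρ) j - u x j) / ε) ^ 2 := by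
        rw [Finset.mul_sum]
        refine Finset.sum_congr rfl fun j _ => ?_
        field_simp
      rw [heq]
      refine mul_le_mul_of_nonneg_left ?_ (sq_nonneg ε)
      exact Finset.single_le_sum
        (f := fun ρ' => ∑ j, ((u (x + ρ') j - u x j) / ε) ^ 2)
        (fun ρ' _ => Finset.sum_nonneg fun j _ => sq_nonneg _) hρR
    have hDnn : 0 ≤ ∑ x ∈ Tf, DnormSq d R ε u x :=
      Finset.sum_nonneg fun x _ =>
        Finset.sum_nonneg fun ρ' _ => Finset.sum_nonneg fun j _ => sq_nonneg _
    have hsum2 : ∑ x ∈ Tf, g x ≤ ε ^ 2 * ∑ x ∈ Tf, DnormSq d R ε u x := by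
      rw [Finset.mul_sum]
      exact Finset.sum_le_sum fun x _ => hgD x
    have hεd : (0 : ℝ) ≤ ε ^ d := pow_nonneg hε0.le d
    have hfin1 : ∑ᶠ z ∈ S, ∑ j, (u z j) ^ 2 = ∑ z ∈ Sf, ∑ j, (u z j) ^ 2 :=
      finsum_mem_eq_finite_toFinset_sum _ hSfin
    have hfin2 : ∑ᶠ z ∈ T, DnormSq d R ε u z = ∑ x ∈ Tf, DnormSq d R ε u x :=
      finsum_mem_eq_finite_toFinset_sum _ hTfin
    rw [l2Norm, h1Norm, ← hSdef, ← hTdef, hfin1, hfin2]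
    have hineq : ε ^ d * ∑ z ∈ Sf, ∑ j, (u z j) ^ 2
        ≤ ((N : ℝ) * ε) ^ 2 * (ε ^ d * ∑ x ∈ Tf, DnormSq d R ε u x) := by
      have h1 : ∑ z ∈ Sf, ∑ j, (u z j) ^ 2
          ≤ (N : ℝ) ^ 2 * (ε ^ 2 * ∑ x ∈ Tf, DnormSq d R ε u x) :=
        main.trans (mul_le_mul_of_nonneg_left hsum2 (sq_nonneg _))
      calc ε ^ d * ∑ z ∈ Sf, ∑ j, (u z j) ^ 2
          ≤ ε ^ d * ((N : ℝ) ^ 2 * (ε ^ 2 * ∑ x ∈ Tf, DnormSq d R ε u x)) :=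
            mul_le_mul_of_nonneg_left h1 hεd
        _ = ((N : ℝ) * ε) ^ 2 * (ε ^ d * ∑ x ∈ Tf, DnormSq d R ε u x) := by ring
    calc Real.sqrt (ε ^ d * ∑ z ∈ Sf, ∑ j, (u z j) ^ 2)
        ≤ Real.sqrt (((N : ℝ) * ε) ^ 2 * (ε ^ d * ∑ x ∈ Tf, DnormSq d R ε u x)) :=
          Real.sqrt_le_sqrt hineq
      _ = ((N : ℝ) * ε) * Real.sqrt (ε ^ d * ∑ x ∈ Tf, DnormSq d R ε u x) := by
          rw [Real.sqrt_mul (sq_nonneg _), Real.sqrt_sq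
            (mul_nonneg (Nat.cast_nonneg N) hε0.le)]
      _ ≤ (Metric.diam Ω + 1) * Real.sqrt (ε ^ d * ∑ x ∈ Tf, DnormSq d R ε u x) :=
          mul_le_mul_of_nonneg_right hNε (Real.sqrt_nonneg _)
  refine ⟨part1, ?_⟩
  -- Part 2
  intro u
  have hεd : (0 : ℝ) ≤ ε ^ d := pow_nonneg hε0.le d
  have hl2nn : 0 ≤ l2Norm d Ω ε R₀ u := Real.sqrt_nonneg _
  apply Real.sSup_le
  · rintro r ⟨φ, hφ0, hφ1, rfl⟩
    have hfinu : ∑ᶠ z ∈ intEps d Ω ε R₀, ∑ j, u z j * φ z j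
        = ∑ z ∈ Sf, ∑ j, u z j * φ z j :=
      finsum_mem_eq_finite_toFinset_sum _ hSfin
    have hfin1 : ∑ᶠ z ∈ intEps d Ω ε R₀, ∑ j, (u z j) ^ 2
        = ∑ z ∈ Sf, ∑ j, (u z j) ^ 2 :=
      finsum_mem_eq_finite_toFinset_sum _ hSfin
    have hfin2 : ∑ᶠ z ∈ intEps d Ω ε R₀, ∑ j, (φ z j) ^ 2
        = ∑ z ∈ Sf, ∑ j, (φ z j) ^ 2 :=
      finsum_mem_eq_finite_toFinset_sum _ hSfin
    set a := ∑ z ∈ Sf, ∑ j, (u z j) ^ 2 with hadef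
    set b := ∑ z ∈ Sf, ∑ j, (φ z j) ^ 2 with hbdef
    set c := ∑ z ∈ Sf, ∑ j, u z j * φ z j with hcdef
    have ha0 : 0 ≤ a := Finset.sum_nonneg fun z _ => Finset.sum_nonneg fun j _ => sq_nonneg _
    have hb0 : 0 ≤ b := Finset.sum_nonneg fun z _ => Finset.sum_nonneg fun j _ => sq_nonneg _
    have hCS : c ^ 2 ≤ a * b := by
      have := Finset.sum_mul_sq_le_sq_mul_sq (Sf ×ˢ Finset.univ)
        (fun p => u p.1 p.2) (fun p => φ p.1 p.2)
      simpa [Finset.sum_product, hadef, hbdef, hcdef] using this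
    have hc : c ≤ Real.sqrt a * Real.sqrt b := by
      calc c ≤ |c| := le_abs_self c
        _ = Real.sqrt (c ^ 2) := (Real.sqrt_sq_eq_abs c).symm
        _ ≤ Real.sqrt (a * b) := Real.sqrt_le_sqrt hCS
        _ = Real.sqrt a * Real.sqrt b := Real.sqrt_mul ha0 _
    have hrle : ε ^ d * c ≤ l2Norm d Ω ε R₀ u * l2Norm d Ω ε R₀ φ := by
      have h1 : l2Norm d Ω ε R₀ u = Real.sqrt (ε ^ d) * Real.sqrt a := by
        rw [l2Norm, hfin1, Real.sqrt_mul hεd]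
      have h2 : l2Norm d Ω ε R₀ φ = Real.sqrt (ε ^ d) * Real.sqrt b := by
        rw [l2Norm, hfin2, Real.sqrt_mul hεd]
      have h3 : Real.sqrt (ε ^ d) * Real.sqrt (ε ^ d) = ε ^ d :=
        Real.mul_self_sqrt hεd
      calc ε ^ d * c ≤ ε ^ d * (Real.sqrt a * Real.sqrt b) :=
            mul_le_mul_of_nonneg_left hc hεd
        _ = (Real.sqrt (ε ^ d) * Real.sqrt a) * (Real.sqrt (ε ^ d) * Real.sqrt b) := by
            rw [show (Real.sqrt (ε ^ d) * Real.sqrt a) * (Real.sqrt (ε ^ d) * Real.sqrt b)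
              = (Real.sqrt (ε ^ d) * Real.sqrt (ε ^ d)) * (Real.sqrt a * Real.sqrt b) from by
                ring, h3]
        _ = _ := by rw [h1, h2]
    have hφl2 : l2Norm d Ω ε R₀ φ ≤ Metric.diam Ω + 1 := by
      have := part1 φ hφ0
      rw [hφ1, mul_one] at this
      exact this
    rw [hfinu]
    calc ε ^ d * c ≤ l2Norm d Ω ε R₀ u * l2Norm d Ω ε R₀ φ := hrle
      _ ≤ l2Norm d Ω ε R₀ u * (Metric.diam Ω + 1) :=
          mul_le_mul_of_nonneg_left hφl2 hl2nn
      _ = (Metric.diam Ω + 1) * l2Norm d Ω ε R₀ u := by ring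
  · have : (0 : ℝ) ≤ Metric.diam Ω + 1 := by linarith [Metric.diam_nonneg (s := Ω)]
    exact mul_nonneg this hl2nn

end
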